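/- For positive integers a, n, m with m ≥ 3 and n ≥ a·2^m: S(n, a·2^m − 1) ≡ a·2^{m−1}·C(n/2 − a·2^{m−2} − 1, a·2^{m−2} − 1) (mod 2^m) if n is even, and S(n, a·2^m − 1) ≡ a·2^{m−1}·C((n+1)/2 − a·2^{m−2} − 2, a·2^{m−2} − 1) + C((n+1)/2 − a·2^{m−2} − 1, a·2^{m−2} − 1) (mod 2^m) if n is odd. -/

import Mathlib

/-- Stirling numbers of the second kind -/
def stirling : ℕ → ℕ → ℕ
  | 0, 0 => 1
  | 0, _ + 1 => 0
  | _ + 1, 0 => 0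
  | n + 1, k + 1 => stirling n k + (k + 1) * stirling n (k + 1)

open PowerSeries

variable {R : Type} [CommRing R]

noncomputable def SF (R : Type) [CommRing R] (k : ℕ) : R⟦X⟧ :=
  PowerSeries.mk fun n => (stirling n k : R)

theorem stirling_gf (k : ℕ) :
    (∏ j ∈ Finset.range k, (1 - ((j : R) + 1) • X)) * SF R k = X ^ k := by
  induction k with
  | zero =>
      simp only [Finset.range_zero, Finset.prod_empty, one_mul, pow_zero]
      ext n
      cases n with
      | zero => simp [SF, stirling]
      | succ n => simp [SF, stirling, coeff_one]
  | succ k ih =>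
      rw [Finset.prod_range_succ, pow_succ]
      have key : (1 - ((k : R) + 1) • X) * SF R (k + 1) = X * SF R k := by
        ext n
        cases n with
        | zero => simp [SF, stirling, coeff_one]
        | succ n =>
            rw [sub_mul, one_mul, map_sub, smul_mul_assoc, map_smul]
            rw [PowerSeries.coeff_succ_X_mul, PowerSeries.coeff_succ_X_mul]
            simp only [SF, coeff_mk]
            show (stirling (n+1) (k+1) : R) - ((k:R)+1) * (stirling n (k+1) : R) = stirling n k
            have : stirling (n+1) (k+1) = stirling n k + (k + 1) * stirling n (k + 1) := rfl
            rw [this]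
            push_cast
            ring
      calc (∏ j ∈ Finset.range k, (1 - ((j : R) + 1) • X)) * (1 - ((k : R) + 1) • X) * SF R (k+1)
          = (∏ j ∈ Finset.range k, (1 - ((j : R) + 1) • X)) * ((1 - ((k : R) + 1) • X) * SF R (k+1)) := by ring
        _ = (∏ j ∈ Finset.range k, (1 - ((j : R) + 1) • X)) * (X * SF R k) := by rw [key]
        _ = ((∏ j ∈ Finset.range k, (1 - ((j : R) + 1) • X)) * SF R k) * X := by ring
        _ = X ^ k * X := by rw [ih]

open Finset


lemma elem_lift {N : ℕ} [NeZero N] (x : ZMod (2*N)) 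
    (hx : (ZMod.castHom (dvd_mul_left N 2) (ZMod N)) x = 0) : ∃ t : ZMod (2*N), x = (N : ZMod (2*N)) * t := by
  have h2N : NeZero (2*N) := ⟨by have := NeZero.ne N; omega⟩
  obtain ⟨v, rfl⟩ : ∃ v : ℕ, x = (v : ZMod (2*N)) := ⟨x.val, (ZMod.natCast_rightInverse x).symm⟩
  rw [map_natCast] at hx
  rw [ZMod.natCast_eq_zero_iff] at hx
  obtain ⟨t, rfl⟩ := hx
  exact ⟨t, by push_cast; ring⟩

lemma sq_congr {N : ℕ} [NeZero N] (P Q : (ZMod (2*N))⟦X⟧)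
    (hNN : ((N : ZMod (2*N)) * N) = 0)
    (h : PowerSeries.map (ZMod.castHom (dvd_mul_left N 2) (ZMod N)) P 
       = PowerSeries.map (ZMod.castHom (dvd_mul_left N 2) (ZMod N)) Q) : P^2 = Q^2 := by
  set D := P - Q with hD
  have hcoeff : ∀ n, ∃ t : ZMod (2*N), coeff n D = (N : ZMod (2*N)) * t := by
    intro n
    apply elem_lift
    have : PowerSeries.map (ZMod.castHom (dvd_mul_left N 2) (ZMod N)) D = 0 := by
      rw [hD, map_sub, h, sub_self]
    calc (ZMod.castHom (dvd_mul_left N 2) (ZMod N)) (coeff n D) 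
        = coeff n (PowerSeries.map (ZMod.castHom (dvd_mul_left N 2) (ZMod N)) D) := by
          rw [PowerSeries.coeff_map]
      _ = 0 := by rw [this]; simp
  have hDD : D * D = 0 := by
    ext n
    rw [PowerSeries.coeff_mul, map_zero]
    apply Finset.sum_eq_zero
    intro p _
    obtain ⟨t1, h1⟩ := hcoeff p.1
    obtain ⟨t2, h2⟩ := hcoeff p.2
    rw [h1, h2]
    calc (N : ZMod (2*N)) * t1 * ((N : ZMod (2*N)) * t2) 
        = ((N : ZMod (2*N)) * N) * (t1 * t2) := by ring
      _ = 0 := by rw [hNN, zero_mul]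
  have h2D : D + D = 0 := by
    ext n
    rw [map_add, map_zero]
    obtain ⟨t, ht⟩ := hcoeff n
    have h0 : ((2*N : ℕ) : ZMod (2*N)) = 0 := ZMod.natCast_self _
    push_cast at h0
    rw [ht]
    calc (N : ZMod (2*N)) * t + (N : ZMod (2*N)) * t = (2 * (N:ZMod (2*N))) * t := by ring
      _ = 0 := by rw [h0, zero_mul]
  have hP : P = Q + D := by rw [hD]; ring
  rw [hP]
  calc (Q + D)^2 = Q^2 + (D + D) * Q + D * D := by ring
    _ = Q^2 := by rw [h2D, hDD, zero_mul, add_zero, add_zero]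


-- the factor
noncomputable def gfac (M j : ℕ) : (ZMod M)⟦X⟧ := 1 - PowerSeries.C ((j : ZMod M)^2) * X^2

theorem sqprod (m : ℕ) (hm : 3 ≤ m) :
    ∏ j ∈ Finset.Ico 1 (2^(m-1)), gfac (2^m) j
      = (1 - X^2)^(2^(m-2)) * (1 - PowerSeries.C ((2^(m-1) : ℕ) : ZMod (2^m)) * X^2) := by
  induction m, hm using Nat.le_induction with
  | base =>
      have h4 : Finset.Ico 1 4 = {1, 2, 3} := rfl
      rw [show (2:ℕ)^(3-1) = 4 from rfl, h4]
      rw [Finset.prod_insert (by decide), Finset.prod_insert (by decide),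
        Finset.prod_singleton]
      unfold gfac
      have e1 : ((1:ℕ) : ZMod (2^3))^2 = 1 := by decide
      have e2 : ((2:ℕ) : ZMod (2^3))^2 = ((4:ℕ) : ZMod (2^3)) := by decide
      have e3 : ((3:ℕ) : ZMod (2^3))^2 = 1 := by decide
      rw [e1, e3, e2, map_one, show (2:ℕ)^(3-2) = 2 from rfl]
      ring
  | succ m hm ih =>
      haveI : NeZero (2^m) := ⟨by positivity⟩
      have hpow : (2:ℕ)^(m+1) = 2 * 2^m := by rw [pow_succ]; ring
      have hm1 : m + 1 - 1 = m := rfl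
      have hm2 : m + 1 - 2 = m - 1 := by omega
      rw [hm1, hm2, hpow]
      have hc2 : ((2^m : ℕ) : ZMod (2*2^m)) * ((2^m : ℕ) : ZMod (2*2^m)) = 0 := by
        rw [← Nat.cast_mul, ZMod.natCast_eq_zero_iff]
        refine ⟨2^(m-1), ?_⟩
        rw [← pow_succ', ← pow_add, ← pow_add]
        congr 1
        omega
      have hc1 : (2 : ZMod (2*2^m)) * ((2^m : ℕ) : ZMod (2*2^m)) = 0 := by
        rw [show (2:ZMod (2*2^m)) = ((2:ℕ): ZMod (2*2^m)) from by push_cast; ring, ← Nat.cast_mul,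
          ZMod.natCast_self]
      have hdouble : 2^(m-1) + 2^(m-1) = 2^m := by
        have h1 : m - 1 + 1 = m := by omega
        calc 2^(m-1) + 2^(m-1) = 2^(m-1+1) := by rw [pow_succ]; ring
          _ = 2^m := by rw [h1]
      have hle1 : 1 ≤ 2^(m-1) := Nat.one_le_two_pow
      have hlt : 2^(m-1) < 2^m := by omega
      rw [← Finset.prod_Ico_consecutive (gfac (2*2^m)) hle1 (le_of_lt hlt),
        Finset.prod_eq_prod_Ico_succ_bot hlt]
      have gmid : gfac (2*2^m) (2^(m-1)) = 1 := by
        unfold gfac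
        have h0 : ((2^(m-1) : ℕ) : ZMod (2*2^m))^2 = 0 := by
          rw [← Nat.cast_pow, ZMod.natCast_eq_zero_iff, ← pow_mul]
          refine ⟨2^(2*(m-1) - (m+1)), ?_⟩
          rw [← pow_succ', ← pow_add]
          congr 1
          omega
        rw [h0, map_zero]
        ring
      have hrefl : ∏ j ∈ Finset.Ico (2^(m-1)+1) (2^m), gfac (2*2^m) j
          = ∏ i ∈ Finset.Ico 1 (2^(m-1)), gfac (2*2^m) i := by
        refine Finset.prod_nbij' (fun j => 2^m - j) (fun i => 2^m - i) ?_ ?_ ?_ ?_ ?_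
        · intro a ha
          simp only [Finset.mem_Ico] at ha ⊢
          omega
        · intro a ha
          simp only [Finset.mem_Ico] at ha ⊢
          omega
        · intro a ha
          simp only [Finset.mem_Ico] at ha
          omega
        · intro a ha
          simp only [Finset.mem_Ico] at ha
          omega
        · intro j hj
          simp only [Finset.mem_Ico] at hj
          unfold gfac
          have hjle : j ≤ 2^m := le_of_lt hj.2
          have hcast : ((2^m - j : ℕ) : ZMod (2*2^m)) = ((2^m : ℕ) : ZMod (2*2^m)) - (j : ZMod (2*2^m)) :=
            Nat.cast_sub hjle
          congr 2
          rw [hcast]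
          refine congrArg _ ?_
          linear_combination (j : ZMod (2*2^m)) * hc1 - hc2
      rw [gmid, one_mul, hrefl, ← sq]
      have hPQ : (∏ i ∈ Finset.Ico 1 (2^(m-1)), gfac (2*2^m) i)^2
          = ((1 - X^2)^(2^(m-2)) * (1 - PowerSeries.C ((2^(m-1) : ℕ) : ZMod (2*2^m)) * X^2))^2 := by
        apply sq_congr _ _ hc2
        rw [map_prod]
        have hfac : ∀ j : ℕ, PowerSeries.map (ZMod.castHom (dvd_mul_left (2^m) 2) (ZMod (2^m)))
            (gfac (2*2^m) j) = gfac (2^m) j := by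
          intro j
          unfold gfac
          simp only [map_sub, map_one, map_mul, map_pow, PowerSeries.map_X,
            PowerSeries.map_C, map_natCast]
        simp only [hfac]
        rw [ih]
        simp only [map_mul, map_sub, map_one, map_pow, PowerSeries.map_X,
          PowerSeries.map_C, map_natCast]
      rw [hPQ]
      have hcc0 : ((2^((m-1)+(m-1)) : ℕ) : ZMod (2*2^m)) = 0 := by
        rw [ZMod.natCast_eq_zero_iff]
        refine ⟨2^((m-1)+(m-1)-(m+1)), ?_⟩
        rw [← pow_succ', ← pow_add]
        congr 1
        omega
      have hcc : PowerSeries.C ((2^(m-1) : ℕ) : ZMod (2*2^m))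
          * PowerSeries.C ((2^(m-1) : ℕ) : ZMod (2*2^m)) = 0 := by
        rw [← map_mul, ← Nat.cast_mul, ← pow_add, hcc0, map_zero]
      have hsum : PowerSeries.C ((2^(m-1) : ℕ) : ZMod (2*2^m))
          + PowerSeries.C ((2^(m-1) : ℕ) : ZMod (2*2^m))
          = PowerSeries.C ((2^m : ℕ) : ZMod (2*2^m)) := by
        rw [← map_add, ← Nat.cast_add, hdouble]
      rw [mul_pow, ← pow_mul]
      have hexp : 2^(m-2)*2 = 2^(m-1) := by
        rw [← pow_succ]
        congr 1
        omega
      rw [hexp]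
      congr 1
      linear_combination (X : (ZMod (2*2^m))⟦X⟧)^4 * hcc - (X : (ZMod (2*2^m))⟦X⟧)^2 * hsum
noncomputable def qfac (M j : ℕ) : (ZMod M)⟦X⟧ := 1 - PowerSeries.C (j : ZMod M) * X

noncomputable def pfac (M j : ℕ) : (ZMod M)⟦X⟧ := 1 + PowerSeries.C (j : ZMod M) * X

theorem pairQ (m : ℕ) (hm : 3 ≤ m) :
    ∏ j ∈ Finset.Ico 1 (2^m), qfac (2^m) j
      = (1 - X^2)^(2^(m-2)) * (1 + PowerSeries.C ((2^(m-1):ℕ) : ZMod (2^m)) * X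
          + PowerSeries.C ((2^(m-1):ℕ) : ZMod (2^m)) * X^2) := by
  haveI : NeZero (2^m) := ⟨by positivity⟩
  have hdouble : 2^(m-1) + 2^(m-1) = 2^m := by
    have h1 : m - 1 + 1 = m := by omega
    calc 2^(m-1) + 2^(m-1) = 2^(m-1+1) := by rw [pow_succ]; ring
      _ = 2^m := by rw [h1]
  have hle1 : 1 ≤ 2^(m-1) := Nat.one_le_two_pow
  have hlt : 2^(m-1) < 2^m := by omega
  have hzero : ((2^m : ℕ) : ZMod (2^m)) = 0 := ZMod.natCast_self _
  have h2c : PowerSeries.C ((2^(m-1):ℕ) : ZMod (2^m))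
      + PowerSeries.C ((2^(m-1):ℕ) : ZMod (2^m)) = 0 := by
    rw [← map_add, ← Nat.cast_add, hdouble, hzero, map_zero]
  have hcc : PowerSeries.C ((2^(m-1):ℕ) : ZMod (2^m))
      * PowerSeries.C ((2^(m-1):ℕ) : ZMod (2^m)) = 0 := by
    have : ((2^(m-1) * 2^(m-1) : ℕ) : ZMod (2^m)) = 0 := by
      rw [ZMod.natCast_eq_zero_iff, ← pow_add]
      exact pow_dvd_pow 2 (by omega)
    rw [← map_mul, ← Nat.cast_mul, this, map_zero]
  rw [← Finset.prod_Ico_consecutive (qfac (2^m)) hle1 (le_of_lt hlt),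
    Finset.prod_eq_prod_Ico_succ_bot hlt]
  have hrefl : ∏ j ∈ Finset.Ico (2^(m-1)+1) (2^m), qfac (2^m) j
      = ∏ i ∈ Finset.Ico 1 (2^(m-1)), pfac (2^m) i := by
    refine Finset.prod_nbij' (fun j => 2^m - j) (fun i => 2^m - i) ?_ ?_ ?_ ?_ ?_
    · intro a ha
      simp only [Finset.mem_Ico] at ha ⊢
      omega
    · intro a ha
      simp only [Finset.mem_Ico] at ha ⊢
      omega
    · intro a ha
      simp only [Finset.mem_Ico] at ha
      omega
    · intro a ha
      simp only [Finset.mem_Ico] at ha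
      omega
    · intro j hj
      simp only [Finset.mem_Ico] at hj
      unfold qfac pfac
      have hcast : ((2^m - j : ℕ) : ZMod (2^m)) = ((2^m : ℕ) : ZMod (2^m)) - (j : ZMod (2^m)) :=
        Nat.cast_sub (le_of_lt hj.2)
      rw [hcast, hzero, zero_sub, map_neg]
      ring
  rw [hrefl, mul_comm (∏ i ∈ Finset.Ico 1 (2^(m-1)), qfac (2^m) i), mul_assoc,
    ← Finset.prod_mul_distrib]
  have hpair : ∀ i : ℕ, pfac (2^m) i * qfac (2^m) i = gfac (2^m) i := by
    intro i
    unfold qfac pfac gfac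
    rw [map_pow]
    ring
  simp only [hpair]
  rw [sqprod m hm]
  unfold qfac
  linear_combination ((1 - (X:(ZMod (2^m))⟦X⟧)^2)^(2^(m-2))) *
    ((-(X:(ZMod (2^m))⟦X⟧) - X^2) * h2c
      + ((X:(ZMod (2^m))⟦X⟧)^3) * hcc)

theorem blockQ (m : ℕ) (a : ℕ) (ha : 1 ≤ a) :
    ∏ j ∈ Finset.Ico 1 (a * 2^m), qfac (2^m) j
      = (∏ j ∈ Finset.Ico 1 (2^m), qfac (2^m) j)^a := by
  haveI : NeZero (2^m) := ⟨by positivity⟩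
  induction a, ha using Nat.le_induction with
  | base => rw [one_mul, pow_one]
  | succ a ha ih =>
      have h1 : (1:ℕ) ≤ a * 2^m := le_trans ha (Nat.le_mul_of_pos_right a (by positivity))
      have h2 : a * 2^m ≤ (a+1) * 2^m := Nat.mul_le_mul_right _ (by omega)
      have hsplit : (a+1) * 2^m = a * 2^m + 2^m := by ring
      rw [← Finset.prod_Ico_consecutive (qfac (2^m)) h1 h2, ih]
      have hblock : ∏ j ∈ Finset.Ico (a * 2^m) ((a+1) * 2^m), qfac (2^m) j
          = ∏ r ∈ Finset.Ico 0 (2^m), qfac (2^m) r := by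
        refine Finset.prod_nbij' (fun j => j - a * 2^m) (fun r => r + a * 2^m) ?_ ?_ ?_ ?_ ?_
        · intro x hx
          simp only [Finset.mem_Ico] at hx ⊢
          omega
        · intro x hx
          simp only [Finset.mem_Ico] at hx ⊢
          omega
        · intro x hx
          simp only [Finset.mem_Ico] at hx
          omega
        · intro x hx
          simp only [Finset.mem_Ico] at hx
          omega
        · intro x hx
          simp only [Finset.mem_Ico] at hx
          unfold qfac
          have : ((x - a * 2^m + a * 2^m : ℕ) : ZMod (2^m)) = (x : ZMod (2^m)) := by
            rw [Nat.sub_add_cancel hx.1]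
          rw [← this, Nat.cast_add, Nat.cast_mul, ZMod.natCast_self, mul_zero, add_zero]
      have hzeroth : ∏ r ∈ Finset.Ico 0 (2^m), qfac (2^m) r
          = ∏ r ∈ Finset.Ico 1 (2^m), qfac (2^m) r := by
        rw [Finset.prod_eq_prod_Ico_succ_bot (by positivity : 0 < 2^m)]
        unfold qfac
        rw [Nat.cast_zero, map_zero, zero_mul, sub_zero, one_mul]
      rw [hblock, hzeroth, pow_succ]

theorem powQ (m : ℕ) (hm : 3 ≤ m) (a : ℕ) :
    (1 + PowerSeries.C ((2^(m-1):ℕ) : ZMod (2^m)) * X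
       + PowerSeries.C ((2^(m-1):ℕ) : ZMod (2^m)) * X^2)^a
    = 1 + PowerSeries.C ((a * 2^(m-1):ℕ) : ZMod (2^m)) * X
       + PowerSeries.C ((a * 2^(m-1):ℕ) : ZMod (2^m)) * X^2 := by
  haveI : NeZero (2^m) := ⟨by positivity⟩
  induction a with
  | zero => simp
  | succ a ih =>
      rw [pow_succ, ih]
      have h0 : PowerSeries.C ((a * 2^(m-1):ℕ) : ZMod (2^m))
          * PowerSeries.C ((2^(m-1):ℕ) : ZMod (2^m)) = 0 := by
        rw [← map_mul, ← Nat.cast_mul]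
        have : ((a * 2^(m-1) * 2^(m-1) : ℕ) : ZMod (2^m)) = 0 := by
          rw [ZMod.natCast_eq_zero_iff]
          have : (2:ℕ)^m ∣ 2^(m-1) * 2^(m-1) := by
            rw [← pow_add]
            exact pow_dvd_pow 2 (by omega)
          exact (mul_assoc a _ _) ▸ Dvd.dvd.mul_left this a
        rw [this, map_zero]
      have hsum : PowerSeries.C (((a+1) * 2^(m-1):ℕ) : ZMod (2^m))
          = PowerSeries.C ((a * 2^(m-1):ℕ) : ZMod (2^m))
            + PowerSeries.C ((2^(m-1):ℕ) : ZMod (2^m)) := by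
        rw [← map_add, ← Nat.cast_add]
        congr 2
        ring
      linear_combination (-(X:(ZMod (2^m))⟦X⟧) - X^2) * hsum
        + ((X:(ZMod (2^m))⟦X⟧) + X^2)^2 * h0

theorem Dfull (m a : ℕ) (hm : 3 ≤ m) (ha : 1 ≤ a) :
    ∏ j ∈ Finset.Ico 1 (a * 2^m), qfac (2^m) j
      = (1 - X^2)^(a * 2^(m-2)) * (1 + PowerSeries.C ((a * 2^(m-1):ℕ) : ZMod (2^m)) * X
       + PowerSeries.C ((a * 2^(m-1):ℕ) : ZMod (2^m)) * X^2) := by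
  rw [blockQ m a ha, pairQ m hm, mul_pow, ← pow_mul, powQ m hm a,
    show 2^(m-2) * a = a * 2^(m-2) from Nat.mul_comm _ _]

noncomputable def Jser (R : Type) [CommRing R] (A : ℕ) : R⟦X⟧ :=
  PowerSeries.mk fun n => if Even n then ((n/2 + A - 1).choose (A-1) : R) else 0

lemma coeff_one_sub_X_sq_mul {R : Type} [CommRing R] (G : R⟦X⟧) (n : ℕ) :
    (PowerSeries.coeff n) ((1 - X^2) * G)
      = PowerSeries.coeff n G - if 2 ≤ n then PowerSeries.coeff (n-2) G else 0 := by
  rw [sub_mul, one_mul, map_sub, coeff_X_pow_mul']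

theorem J_step {R : Type} [CommRing R] (A : ℕ) (hA : 1 ≤ A) :
    (1 - X^2) * Jser R (A+1) = Jser R A := by
  obtain ⟨B, rfl⟩ : ∃ B, A = B + 1 := ⟨A-1, by omega⟩
  ext n
  rw [coeff_one_sub_X_sq_mul]
  simp only [Jser, coeff_mk, Nat.add_sub_cancel]
  rcases Nat.even_or_odd n with he | ho
  · rw [if_pos he]
    rcases Nat.lt_or_ge n 2 with h2 | h2
    · have hn0 : n = 0 := by
        rcases he with ⟨t, ht⟩
        omega
      subst hn0
      rw [if_neg (by omega), if_pos (Even.zero)]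
      norm_num [Nat.choose_self]
    · have he2 : Even (n-2) := by
        rcases he with ⟨t, ht⟩
        exact ⟨t-1, by omega⟩
      rw [if_pos h2, if_pos he2, if_pos he]
      have hk : 1 ≤ n/2 := by omega
      have harg1 : n/2 + (B+1+1) - 1 = n/2 + (B+1) := by omega
      have harg2 : (n-2)/2 + (B+1+1) - 1 = n/2 - 1 + (B+1) := by omega
      have harg3 : n/2 + (B+1) - 1 = n/2 - 1 + (B+1) := by omega
      rw [harg1, harg2, harg3]
      have pascal : (n/2 - 1 + (B+1)).choose B + (n/2 - 1 + (B+1)).choose (B+1)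
          = (n/2 + (B+1)).choose (B+1) := by
        have h1 : n/2 + (B+1) = (n/2 - 1 + (B+1)) + 1 := by omega
        rw [h1, Nat.choose_succ_succ]
      have hc := congrArg (fun t : ℕ => (t : R)) pascal
      push_cast at hc ⊢
      linear_combination -hc
  · have ho' : ¬ Even n := by exact (Nat.not_even_iff_odd).mpr ho
    rw [if_neg ho', if_neg ho']
    rcases Nat.lt_or_ge n 2 with h2 | h2
    · rw [if_neg (by omega)]
      ring
    · have : ¬ Even (n-2) := by
        intro hcon
        apply ho'
        rcases hcon with ⟨t, ht⟩
        exact ⟨t+1, by omega⟩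
      rw [if_pos h2, if_neg this]
      ring

theorem J_inv {R : Type} [CommRing R] (A : ℕ) (hA : 1 ≤ A) :
    (1 - X^2)^A * Jser R A = 1 := by
  induction A, hA using Nat.le_induction with
  | base =>
      ext n
      rw [pow_one, coeff_one_sub_X_sq_mul]
      simp only [Jser, coeff_mk, Nat.add_sub_cancel]
      rcases Nat.even_or_odd n with he | ho
      · rcases Nat.lt_or_ge n 2 with h2 | h2
        · have hn0 : n = 0 := by
            rcases he with ⟨t, ht⟩
            omega
          subst hn0
          rw [if_pos (Even.zero), if_neg (by omega)]
          simp [PowerSeries.coeff_one]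
        · have he2 : Even (n-2) := by
            rcases he with ⟨t, ht⟩
            exact ⟨t-1, by omega⟩
          rw [if_pos he, if_pos h2, if_pos he2]
          have hn0 : n ≠ 0 := by omega
          rw [PowerSeries.coeff_one, if_neg hn0]
          simp
      · have ho' : ¬ Even n := by exact (Nat.not_even_iff_odd).mpr ho
        rw [if_neg ho']
        have hn0 : n ≠ 0 := by
          intro h
          exact ho' (h ▸ Even.zero)
        rw [PowerSeries.coeff_one, if_neg hn0]
        rcases Nat.lt_or_ge n 2 with h2 | h2
        · rw [if_neg (by omega)]
          ring
        · have : ¬ Even (n-2) := by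
            intro hcon
            apply ho'
            rcases hcon with ⟨t, ht⟩
            exact ⟨t+1, by omega⟩
          rw [if_pos h2, if_neg this]
          ring
  | succ A hA ih =>
      calc (1 - X^2)^(A+1) * Jser R (A+1) 
          = (1 - X^2)^A * ((1 - X^2) * Jser R (A+1)) := by ring
        _ = (1 - X^2)^A * Jser R A := by rw [J_step A hA]
        _ = 1 := ih


theorem stirling_mod_pow_two (a n m : ℕ) (ha : 0 < a) (hn : 0 < n) (hm : 3 ≤ m)
    (hna : a * 2 ^ m ≤ n) :
    (Even n →
      stirling n (a * 2 ^ m - 1) ≡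
        a * 2 ^ (m - 1) * Nat.choose (n / 2 - a * 2 ^ (m - 2) - 1) (a * 2 ^ (m - 2) - 1)
          [MOD 2 ^ m]) ∧
    (Odd n →
      stirling n (a * 2 ^ m - 1) ≡
        a * 2 ^ (m - 1) * Nat.choose ((n + 1) / 2 - a * 2 ^ (m - 2) - 2) (a * 2 ^ (m - 2) - 1)
          + Nat.choose ((n + 1) / 2 - a * 2 ^ (m - 2) - 1) (a * 2 ^ (m - 2) - 1)
          [MOD 2 ^ m]) := by
  haveI : NeZero ((2:ℕ)^m) := ⟨by positivity⟩
  have ha1 : 1 ≤ a := ha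
  have e2 : (2:ℕ)^(m-1) = 2*2^(m-2) := by
    rw [← pow_succ']
    congr 1
    omega
  have e1 : (2:ℕ)^m = 4*2^(m-2) := by
    rw [show (4:ℕ) = 2^2 from rfl, ← pow_add]
    congr 1
    omega
  have hA1 : 1 ≤ a * 2^(m-2) := Nat.one_le_iff_ne_zero.mpr (by positivity)
  have h4 : a*2^m = 4*(a*2^(m-2)) := by rw [e1]; ring
  have h2' : a*2^(m-1) = 2*(a*2^(m-2)) := by rw [e2]; ring
  -- the key power series identity
  have hgf := stirling_gf (R := ZMod (2^m)) (a * 2^m - 1)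
  have hconv : (∏ j ∈ Finset.range (a * 2^m - 1), (1 - ((j : ZMod (2^m)) + 1) • X))
      = ∏ j ∈ Finset.Ico 1 (a * 2^m), qfac (2^m) j := by
    rw [Finset.prod_Ico_eq_prod_range]
    apply Finset.prod_congr rfl
    intro i _
    unfold qfac
    rw [PowerSeries.smul_eq_C_mul]
    congr 2
    push_cast
    ring
  have hc2 : PowerSeries.C ((a * 2^(m-1):ℕ) : ZMod (2^m))
      * PowerSeries.C ((a * 2^(m-1):ℕ) : ZMod (2^m)) = 0 := by
    rw [← map_mul, ← Nat.cast_mul]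
    have : ((a * 2^(m-1) * (a * 2^(m-1)) : ℕ) : ZMod (2^m)) = 0 := by
      rw [ZMod.natCast_eq_zero_iff]
      have hd : (2:ℕ)^m ∣ 2^(m-1) * 2^(m-1) := by
        rw [← pow_add]
        exact pow_dvd_pow 2 (by omega)
      calc (2:ℕ)^m ∣ 2^(m-1) * 2^(m-1) := hd
        _ ∣ a * 2^(m-1) * (a * 2^(m-1)) := ⟨a*a, by ring⟩
    rw [this, map_zero]
  have h2c : PowerSeries.C ((a * 2^(m-1):ℕ) : ZMod (2^m))
      + PowerSeries.C ((a * 2^(m-1):ℕ) : ZMod (2^m)) = 0 := by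
    rw [← map_add, ← Nat.cast_add]
    have : ((a * 2^(m-1) + a * 2^(m-1) : ℕ) : ZMod (2^m)) = 0 := by
      rw [ZMod.natCast_eq_zero_iff]
      exact ⟨a, by rw [e2, e1]; ring⟩
    rw [this, map_zero]
  set c : ZMod (2^m) := ((a * 2^(m-1):ℕ) : ZMod (2^m)) with hc
  set E : (ZMod (2^m))⟦X⟧ := 1 + PowerSeries.C c * X
      + PowerSeries.C c * X^2 with hE
  have hEE : E * E = 1 := by
    rw [hE]
    linear_combination ((X:(ZMod (2^m))⟦X⟧) + X^2
        + PowerSeries.C c * (X+X^2)^2) * h2c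
      + (-((X:(ZMod (2^m))⟦X⟧)+X^2)^2) * hc2
  have hunit : IsUnit ((1 - (X:(ZMod (2^m))⟦X⟧)^2)^(a * 2^(m-2)) * E) := by
    rw [PowerSeries.isUnit_iff_constantCoeff]
    simp [hE]
  have h1 : ((1 - (X:(ZMod (2^m))⟦X⟧)^2)^(a * 2^(m-2)) * E) * SF (ZMod (2^m)) (a * 2^m - 1)
      = X^(a * 2^m - 1) := by
    rw [← Dfull m a hm ha1, ← hconv]
    exact hgf
  have h2 : ((1 - (X:(ZMod (2^m))⟦X⟧)^2)^(a * 2^(m-2)) * E)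
      * (X^(a * 2^m - 1) * (E * Jser (ZMod (2^m)) (a * 2^(m-2)))) = X^(a * 2^m - 1) := by
    calc ((1 - (X:(ZMod (2^m))⟦X⟧)^2)^(a * 2^(m-2)) * E)
        * (X^(a * 2^m - 1) * (E * Jser (ZMod (2^m)) (a * 2^(m-2))))
        = X^(a * 2^m - 1) * ((E * E) * ((1 - X^2)^(a * 2^(m-2)) * Jser (ZMod (2^m)) (a * 2^(m-2)))) := by
          ring
      _ = X^(a * 2^m - 1) := by rw [hEE, J_inv _ hA1, one_mul, mul_one]
  have hSF : SF (ZMod (2^m)) (a * 2^m - 1)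
      = X^(a * 2^m - 1) * (E * Jser (ZMod (2^m)) (a * 2^(m-2))) :=
    hunit.mul_left_cancel (h1.trans h2.symm)
  -- coefficient extraction
  have hGsum : E * Jser (ZMod (2^m)) (a * 2^(m-2)) = Jser (ZMod (2^m)) (a * 2^(m-2))
      + PowerSeries.C c * (X^1 * Jser (ZMod (2^m)) (a * 2^(m-2)))
      + PowerSeries.C c * (X^2 * Jser (ZMod (2^m)) (a * 2^(m-2))) := by
    rw [hE, pow_one]
    ring
  have hcoeff := congrArg (PowerSeries.coeff n) hSF
  rw [coeff_X_pow_mul', if_pos (by omega : a * 2^m - 1 ≤ n), hGsum, map_add, map_add,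
    PowerSeries.coeff_C_mul, PowerSeries.coeff_C_mul, coeff_X_pow_mul', coeff_X_pow_mul'] at hcoeff
  simp only [SF, Jser, coeff_mk] at hcoeff
  -- now case on parity
  have hmod : ∀ x y : ℕ, (x : ZMod (2^m)) = (y : ZMod (2^m)) → x ≡ y [MOD 2^m] := by
    intro x y h
    exact (ZMod.natCast_eq_natCast_iff _ _ _).mp h
  constructor
  · intro he
    rw [Nat.even_iff] at he
    apply hmod
    rw [hcoeff]
    have hto : ¬ Even (n - (a * 2^m - 1)) := by
      rw [Nat.even_iff]
      omega
    have ht1 : 1 ≤ n - (a * 2^m - 1) := by omega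
    have hte : Even (n - (a * 2^m - 1) - 1) := by
      rw [Nat.even_iff]
      omega
    rw [if_neg hto, if_pos ht1, if_pos hte]
    have harg : (n - (a * 2^m - 1) - 1)/2 + a * 2^(m-2) - 1
        = n / 2 - a * 2^(m-2) - 1 := by omega
    rw [harg]
    rcases Nat.lt_or_ge (n - (a * 2^m - 1)) 2 with h2t | h2t
    · rw [if_neg (by omega)]
      push_cast [hc]
      ring
    · have : ¬ Even (n - (a * 2^m - 1) - 2) := by
        rw [Nat.even_iff]
        omega
      rw [if_pos h2t, if_neg this]
      push_cast [hc]
      ring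
  · intro ho
    rw [Nat.odd_iff] at ho
    apply hmod
    rw [hcoeff]
    have hte : Even (n - (a * 2^m - 1)) := by
      rw [Nat.even_iff]
      omega
    have ht2 : 2 ≤ n - (a * 2^m - 1) := by omega
    have hto : ¬ Even (n - (a * 2^m - 1) - 1) := by
      rw [Nat.even_iff]
      omega
    have hte2 : Even (n - (a * 2^m - 1) - 2) := by
      rw [Nat.even_iff]
      omega
    rw [if_pos hte, if_pos (by omega : 1 ≤ n - (a * 2^m - 1)), if_neg hto, if_pos ht2,
      if_pos hte2]
    have harg1 : (n - (a * 2^m - 1))/2 + a * 2^(m-2) - 1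
        = (n+1) / 2 - a * 2^(m-2) - 1 := by omega
    have harg2 : (n - (a * 2^m - 1) - 2)/2 + a * 2^(m-2) - 1
        = (n+1) / 2 - a * 2^(m-2) - 2 := by omega
    rw [harg1, harg2]
    push_cast [hc]
    ring
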